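/- Let k be a field of characteristic p > 0 and R = k[t,u,v,x,y]/(u^2 x^2 + t u x v y + v^2 y^2). Then the set ⋃_{e ≥ 1} Ass(R / (u^q, v^q, x^q, y^q)), where q = p^e, is infinite. -/

import Mathlib

open MvPolynomial

/-- The hypersurface equation `u²x² + t u x v y + v²y²` in `k[t,u,v,x,y]`
(with `t = X 0`, `u = X 1`, `v = X 2`, `x = X 3`, `y = X 4`). -/
noncomputable def ssEqn (k : Type*) [Field k] : MvPolynomial (Fin 5) k :=
  (X 1) ^ 2 * (X 3) ^ 2 + (X 0) * (X 1) * (X 3) * (X 2) * (X 4) + (X 2) ^ 2 * (X 4) ^ 2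

/-- The hypersurface `R = k[t,u,v,x,y]/(u²x² + t u x v y + v²y²)`. -/
abbrev SSRing (k : Type*) [Field k] :=
  MvPolynomial (Fin 5) k ⧸ Ideal.span {ssEqn k}

/-- The Frobenius power `(u^q, v^q, x^q, y^q)` in `SSRing k`. -/
noncomputable def ssFrob (k : Type*) [Field k] (q : ℕ) : Ideal (SSRing k) :=
  Ideal.span {Ideal.Quotient.mk (Ideal.span {ssEqn k}) ((X 1) ^ q),
    Ideal.Quotient.mk (Ideal.span {ssEqn k}) ((X 2) ^ q),
    Ideal.Quotient.mk (Ideal.span {ssEqn k}) ((X 3) ^ q),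
    Ideal.Quotient.mk (Ideal.span {ssEqn k}) ((X 4) ^ q)}

set_option maxHeartbeats 1000000
set_option synthInstance.maxHeartbeats 1000000
set_option linter.unusedSectionVars false
set_option linter.unusedVariables false

section SSC

noncomputable def ssC (k : Type*) [Field k] : ℕ → Polynomial k
  | 0 => 0
  | 1 => 1
  | (n+2) => -(Polynomial.X * ssC k (n+1)) - ssC k n

variable {k : Type*} [Field k]

lemma ssC_zero : ssC k 0 = 0 := rfl
lemma ssC_one : ssC k 1 = 1 := rfl
lemma ssC_add_two (n : ℕ) : ssC k (n+2) = -(Polynomial.X * ssC k (n+1)) - ssC k n := rfl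
lemma ssC_two : ssC k 2 = -Polynomial.X := by
  rw [show 2 = 0 + 2 from rfl, ssC_add_two]; simp [ssC_zero, ssC_one]

lemma ssC_coprime_succ (n : ℕ) : IsCoprime (ssC k n) (ssC k (n+1)) := by
  induction n with
  | zero => simpa [ssC_zero, ssC_one] using isCoprime_zero_left.mpr isUnit_one
  | succ n ih =>
    have h : ssC k (n+2) = (-ssC k n) + ssC k (n+1) * (-Polynomial.X) := by
      rw [ssC_add_two]; ring
    rw [h]
    exact (ih.symm.neg_right).add_mul_left_right _

lemma ssC_addition (m n : ℕ) :
    ssC k (m + n + 1) = ssC k (m+1) * ssC k (n+1) - ssC k m * ssC k n := by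
  induction m using Nat.twoStepInduction with
  | zero => simp [ssC_zero, ssC_one]
  | one =>
    have h1 : 1 + n + 1 = n + 2 := by omega
    rw [h1, ssC_add_two, ssC_two, ssC_one]; ring
  | more m ih1 ih2 =>
    have e1 : m + 2 + n + 1 = (m + n + 1) + 2 := by omega
    have e2 : m + 1 + n + 1 = (m + n + 1) + 1 := by omega
    have ih2' : ssC k (m + n + 1 + 1) = ssC k (m + 1 + 1) * ssC k (n + 1) - ssC k (m + 1) * ssC k n := by
      rw [← e2] at *; exact ih2
    rw [e1, ssC_add_two, ih1, ih2', show m+2+1 = (m+1)+2 from rfl, ssC_add_two, ssC_add_two, ssC_add_two]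
    ring

private lemma ssC_cop_aux (N : ℕ)
    (ih : ∀ m n, m + n ≤ N → 1 ≤ m → 1 ≤ n → Nat.Coprime m n → IsCoprime (ssC k m) (ssC k n))
    (m n : ℕ) (hmn : m + n ≤ N + 1) (hm : 1 ≤ m) (hn : 1 ≤ n) (hco : Nat.Coprime m n)
    (hlt : m < n) : IsCoprime (ssC k m) (ssC k n) := by
  have hn' : n = (n - m - 1) + m + 1 := by omega
  have key : ssC k n = ssC k (n - m) * ssC k (m+1) - ssC k (n-m-1) * ssC k m := by
    have h := ssC_addition (k := k) (n - m - 1) m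
    rw [← hn'] at h
    rw [h]
    congr 3
    omega
  have hco' : Nat.Coprime m (n - m) := (Nat.coprime_sub_self_right hlt.le).mpr hco
  have h1 : IsCoprime (ssC k m) (ssC k (n - m)) :=
    ih m (n - m) (by omega) hm (by omega) hco'
  have h2 : IsCoprime (ssC k m) (ssC k (m+1)) := ssC_coprime_succ m
  have h3 : IsCoprime (ssC k m) (ssC k (n-m) * ssC k (m+1)) := h1.mul_right h2
  have key2 : ssC k n = ssC k (n-m) * ssC k (m+1) + (- ssC k (n-m-1)) * ssC k m := by
    rw [key]; ring
  rw [key2]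
  exact h3.add_mul_right_right _

lemma ssC_coprime (m n : ℕ) (hm : 1 ≤ m) (hn : 1 ≤ n) (hco : Nat.Coprime m n) :
    IsCoprime (ssC k m) (ssC k n) := by
  suffices h : ∀ N m n, m + n ≤ N → 1 ≤ m → 1 ≤ n → Nat.Coprime m n →
      IsCoprime (ssC k m) (ssC k n) from h (m+n) m n le_rfl hm hn hco
  intro N
  induction N with
  | zero => intro m n h hm'; omega
  | succ N ih =>
    intro m n hmn hm' hn' hco'
    rcases lt_trichotomy m n with hlt | heq | hgt
    · exact ssC_cop_aux N ih m n hmn hm' hn' hco' hlt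
    · subst heq
      have : m = 1 := by
        have := Nat.Coprime.gcd_eq_one hco'
        simpa [Nat.gcd_self] using this
      subst this; simp [ssC_one, isCoprime_one_left]
    · exact (ssC_cop_aux N (fun a b hab ha hb hc => (ih b a (by omega) hb ha hc.symm).symm)
        n m (by omega) hn' hm' hco'.symm hgt).symm

lemma ssC_degree (n : ℕ) : (ssC k (n+1)).degree = n := by
  induction n using Nat.twoStepInduction with
  | zero => simp [ssC_one]
  | one => simp [ssC_two]
  | more n ih1 ih2 =>
    rw [ssC_add_two]
    have h1 : (-(Polynomial.X * ssC k (n+2))).degree = ((n+2 : ℕ) : WithBot ℕ) := by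
      rw [Polynomial.degree_neg, Polynomial.degree_mul, Polynomial.degree_X, ih2]
      rw [show ((n+2:ℕ) : WithBot ℕ) = ((n+1:ℕ) : WithBot ℕ) + 1 by push_cast; ring]
      ring
    rw [sub_eq_add_neg, Polynomial.degree_add_eq_left_of_degree_lt, h1]
    rw [h1, Polynomial.degree_neg, ih1]
    exact_mod_cast by exact_mod_cast Nat.cast_lt.mpr (by omega : n < n + 2)

lemma ssC_ne_zero (n : ℕ) : ssC k (n+1) ≠ 0 := by
  intro h
  have := ssC_degree (k := k) n
  rw [h, Polynomial.degree_zero] at this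
  exact (by simp : (⊥ : WithBot ℕ) ≠ (n : WithBot ℕ)) this

lemma ssC_not_unit (n : ℕ) : ¬ IsUnit (ssC k (n+2)) := by
  intro h
  have hd := Polynomial.degree_eq_zero_of_isUnit h
  rw [ssC_degree (k := k) (n+1)] at hd
  exact absurd hd (by exact_mod_cast (by omega : (n+1 : ℕ) ≠ 0))

end SSC

section SSA
variable {k : Type*} [Field k]

/-- image of `ssC` in the 5-variable polynomial ring, `t ↦ X 0`. -/
noncomputable def ssCA (k : Type*) [Field k] (n : ℕ) : MvPolynomial (Fin 5) k :=
  Polynomial.aeval (X 0) (ssC k n)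

lemma ssCA_zero : ssCA k 0 = 0 := by simp [ssCA, ssC_zero]
lemma ssCA_one : ssCA k 1 = 1 := by simp [ssCA, ssC_one]
lemma ssCA_add_two (n : ℕ) :
    ssCA k (n+2) = -(X 0 * ssCA k (n+1)) - ssCA k n := by
  simp [ssCA, ssC_add_two, map_sub, map_neg, map_mul, Polynomial.aeval_X]

lemma ssIdentity (n : ℕ) : ∃ s : MvPolynomial (Fin 5) k,
    ssCA k (n+1) * (X 1 * X 3) * (X 2 * X 4)^n
      = (X 1 * X 3)^(n+1) + ssCA k n * (X 2 * X 4)^(n+1) + ssEqn k * s := by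
  induction n with
  | zero => exact ⟨0, by simp [ssCA_one, ssCA_zero]⟩
  | succ n ih =>
    obtain ⟨s, hs⟩ := ih
    refine ⟨s * (X 1 * X 3) - ssCA k (n+1) * (X 2 * X 4)^n, ?_⟩
    rw [ssCA_add_two, ssEqn]
    rw [ssEqn] at hs
    linear_combination (X 1 * X 3) * hs

lemma ssMem (m d : ℕ) :
    ssCA k (m+1) * (X 1^(d+1) * X 2^(d+m) * X 3 * X 4^m) ∈
      Ideal.span {(X 1 : MvPolynomial (Fin 5) k)^(d+m+1), X 2^(d+m+1), X 3^(d+m+1),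
        X 4^(d+m+1), ssEqn k} := by
  obtain ⟨s, hs⟩ := ssIdentity (k := k) m
  have key : ssCA k (m+1) * (X 1^(d+1) * X 2^(d+m) * X 3 * X 4^m)
      = X 1^(d+m+1) * (X 2^d * X 3^(m+1))
        + X 2^(d+m+1) * (ssCA k m * (X 1^d * X 4^(m+1)))
        + ssEqn k * (X 1^d * X 2^d * s) := by
    linear_combination (X 1^d * X 2^d) * hs
  rw [key]
  have h1 : (X 1 : MvPolynomial (Fin 5) k)^(d+m+1) ∈ ({(X 1 : MvPolynomial (Fin 5) k)^(d+m+1), X 2^(d+m+1), X 3^(d+m+1), X 4^(d+m+1), ssEqn k} : Set (MvPolynomial (Fin 5) k)) := by simp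
  have h2 : (X 2 : MvPolynomial (Fin 5) k)^(d+m+1) ∈ ({(X 1 : MvPolynomial (Fin 5) k)^(d+m+1), X 2^(d+m+1), X 3^(d+m+1), X 4^(d+m+1), ssEqn k} : Set (MvPolynomial (Fin 5) k)) := by simp
  have h5 : ssEqn k ∈ ({(X 1 : MvPolynomial (Fin 5) k)^(d+m+1), X 2^(d+m+1), X 3^(d+m+1), X 4^(d+m+1), ssEqn k} : Set (MvPolynomial (Fin 5) k)) := by simp
  exact Ideal.add_mem _ (Ideal.add_mem _
    (Ideal.mul_mem_right _ _ (Ideal.subset_span h1))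
    (Ideal.mul_mem_right _ _ (Ideal.subset_span h2)))
    (Ideal.mul_mem_right _ _ (Ideal.subset_span h5))

end SSA

section NM
variable {K : Type*} [CommRing K]

/-- exponent vectors of the dual functional -/
noncomputable def ssE (n d α : ℕ) : Fin 4 →₀ ℕ :=
  Finsupp.single 0 (d+α) + Finsupp.single 1 (d+n-α) + Finsupp.single 2 α +
    Finsupp.single 3 (n-α)

lemma ssE_apply0 (n d α : ℕ) : ssE n d α 0 = d + α := by
  simp [ssE, Finsupp.single_apply]
lemma ssE_apply1 (n d α : ℕ) : ssE n d α 1 = d + n - α := by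
  simp [ssE, Finsupp.single_apply]
lemma ssE_apply2 (n d α : ℕ) : ssE n d α 2 = α := by
  simp [ssE, Finsupp.single_apply]
lemma ssE_apply3 (n d α : ℕ) : ssE n d α 3 = n - α := by
  simp [ssE, Finsupp.single_apply]

/-- the dual functional -/
noncomputable def ssTheta (n d : ℕ) (γ : ℕ → K) (P : MvPolynomial (Fin 4) K) : K :=
  ∑ α ∈ Finset.range (n+1), γ (n-α) * MvPolynomial.coeff (ssE n d α) P

lemma ssTheta_add (n d : ℕ) (γ : ℕ → K) (P Q : MvPolynomial (Fin 4) K) :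
    ssTheta n d γ (P + Q) = ssTheta n d γ P + ssTheta n d γ Q := by
  simp [ssTheta, MvPolynomial.coeff_add, mul_add, Finset.sum_add_distrib]

lemma ssTheta_zero (n d : ℕ) (γ : ℕ → K) : ssTheta n d γ 0 = 0 := by
  simp [ssTheta]

variable (lam : K) (γ : ℕ → K) (m d : ℕ)
  (hrec : ∀ j, γ (j+2) = -(lam * γ (j+1)) - γ j) (hγ0 : γ 0 = 0) (hγn : γ (m+2) = 0)

-- kill by the four Frobenius generators
include hγ0 hγn in
lemma ssTheta_kill_pow0 (P : MvPolynomial (Fin 4) K) :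
    ssTheta (m+2) d γ (P * monomial (Finsupp.single (0 : Fin 4) (d+(m+2))) 1) = 0 := by
  rw [ssTheta]
  refine Finset.sum_eq_zero (fun α hα => ?_)
  rw [Finset.mem_range] at hα
  rw [MvPolynomial.coeff_mul_monomial']
  by_cases h : α = m+2
  · subst h; simp [hγ0]
  · rw [if_neg, mul_zero]
    rw [Finsupp.single_le_iff, ssE_apply0]
    omega

include hγ0 hγn in
lemma ssTheta_kill_pow1 (P : MvPolynomial (Fin 4) K) :
    ssTheta (m+2) d γ (P * monomial (Finsupp.single (1 : Fin 4) (d+(m+2))) 1) = 0 := by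
  rw [ssTheta]
  refine Finset.sum_eq_zero (fun α hα => ?_)
  rw [Finset.mem_range] at hα
  rw [MvPolynomial.coeff_mul_monomial']
  by_cases h : α = 0
  · subst h; simp [hγn]
  · rw [if_neg, mul_zero]
    rw [Finsupp.single_le_iff, ssE_apply1]
    omega

include hγ0 hγn in
lemma ssTheta_kill_pow2 (P : MvPolynomial (Fin 4) K) :
    ssTheta (m+2) d γ (P * monomial (Finsupp.single (2 : Fin 4) (d+(m+2))) 1) = 0 := by
  rw [ssTheta]
  refine Finset.sum_eq_zero (fun α hα => ?_)
  rw [Finset.mem_range] at hα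
  rw [MvPolynomial.coeff_mul_monomial']
  by_cases h : α = m+2
  · subst h; simp [hγ0]
  · rw [if_neg, mul_zero]
    rw [Finsupp.single_le_iff, ssE_apply2]
    omega

include hγ0 hγn in
lemma ssTheta_kill_pow3 (P : MvPolynomial (Fin 4) K) :
    ssTheta (m+2) d γ (P * monomial (Finsupp.single (3 : Fin 4) (d+(m+2))) 1) = 0 := by
  rw [ssTheta]
  refine Finset.sum_eq_zero (fun α hα => ?_)
  rw [Finset.mem_range] at hα
  rw [MvPolynomial.coeff_mul_monomial']
  by_cases h : α = 0
  · subst h; simp [hγn]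
  · rw [if_neg, mul_zero]
    rw [Finsupp.single_le_iff, ssE_apply3]
    omega


/-- the three exponent vectors of `f` -/
noncomputable def ssS1 : Fin 4 →₀ ℕ := Finsupp.single 0 2 + Finsupp.single 2 2
noncomputable def ssS2 : Fin 4 →₀ ℕ :=
  Finsupp.single 0 1 + Finsupp.single 1 1 + Finsupp.single 2 1 + Finsupp.single 3 1
noncomputable def ssS3 : Fin 4 →₀ ℕ := Finsupp.single 1 2 + Finsupp.single 3 2

lemma ssS1_le_iff (n d α : ℕ) (hα : α ≤ n) : ssS1 ≤ ssE n d α ↔ 2 ≤ α := by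
  constructor
  · intro h
    have := Finsupp.le_def.mp h 2
    rw [ssE_apply2] at this
    simpa [ssS1, Finsupp.single_apply] using this
  · intro h
    rw [Finsupp.le_def]
    intro i
    fin_cases i <;>
      simp [ssS1, ssE, Finsupp.single_apply] <;> omega

lemma ssS2_le_iff (n d α : ℕ) (hα : α ≤ n) : ssS2 ≤ ssE n d α ↔ (1 ≤ α ∧ α + 1 ≤ n) := by
  constructor
  · intro h
    have h2 := Finsupp.le_def.mp h 2
    have h3 := Finsupp.le_def.mp h 3
    rw [ssE_apply2] at h2
    rw [ssE_apply3] at h3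
    simp [ssS2, Finsupp.single_apply] at h2 h3
    omega
  · intro h
    rw [Finsupp.le_def]
    intro i
    fin_cases i <;>
      simp [ssS2, ssE, Finsupp.single_apply] <;> omega

lemma ssS3_le_iff (n d α : ℕ) (hα : α ≤ n) : ssS3 ≤ ssE n d α ↔ α + 2 ≤ n := by
  constructor
  · intro h
    have h3 := Finsupp.le_def.mp h 3
    rw [ssE_apply3] at h3
    simp [ssS3, Finsupp.single_apply] at h3
    omega
  · intro h
    rw [Finsupp.le_def]
    intro i
    fin_cases i <;>
      simp [ssS3, ssE, Finsupp.single_apply] <;> omega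

lemma ssE_sub1 (n d α : ℕ) (h2 : 2 ≤ α) (hα : α ≤ n) :
    ssE n d α - ssS1 = ssE (n-2) d (α-2) := by
  ext i
  rw [Finsupp.tsub_apply]
  fin_cases i <;>
    simp [ssS1, ssE, Finsupp.single_apply] <;> omega

lemma ssE_sub2 (n d α : ℕ) (h1 : 1 ≤ α) (hα : α + 1 ≤ n) :
    ssE n d α - ssS2 = ssE (n-2) d (α-1) := by
  ext i
  rw [Finsupp.tsub_apply]
  fin_cases i <;>
    simp [ssS2, ssE, Finsupp.single_apply] <;> omega

lemma ssE_sub3 (n d α : ℕ) (hα : α + 2 ≤ n) :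
    ssE n d α - ssS3 = ssE (n-2) d α := by
  ext i
  rw [Finsupp.tsub_apply]
  fin_cases i <;>
    simp [ssS3, ssE, Finsupp.single_apply] <;> omega

include hrec hγ0 hγn in
lemma ssTheta_kill_f (P : MvPolynomial (Fin 4) K) :
    ssTheta (m+2) d γ
      (P * (monomial ssS1 1 + monomial ssS2 lam + monomial ssS3 (1:K))) = 0 := by
  rw [mul_add, mul_add, ssTheta_add, ssTheta_add]
  have e1 : ssTheta (m+2) d γ (P * monomial ssS1 1)
      = ∑ β ∈ Finset.range (m+1), γ (m-β) * MvPolynomial.coeff (ssE m d β) P := by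
    rw [ssTheta]
    have step : ∀ α ∈ Finset.range (m+3),
        γ (m+2-α) * MvPolynomial.coeff (ssE (m+2) d α) (P * monomial ssS1 1)
          = if 2 ≤ α then γ (m+2-α) * MvPolynomial.coeff (ssE m d (α-2)) P else 0 := by
      intro α hα
      rw [Finset.mem_range] at hα
      rw [MvPolynomial.coeff_mul_monomial']
      by_cases h : 2 ≤ α
      · rw [if_pos ((ssS1_le_iff (m+2) d α (by omega)).mpr h), if_pos h,
          ssE_sub1 (m+2) d α h (by omega)]
        simp
      · rw [if_neg (fun hc => h ((ssS1_le_iff (m+2) d α (by omega)).mp hc)), if_neg h, mul_zero]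
    rw [Finset.sum_congr rfl step]
    rw [Finset.sum_range_succ', Finset.sum_range_succ']
    simp only [show ¬ (2:ℕ) ≤ 0 by omega, show ¬ (2:ℕ) ≤ 0+1 by omega, if_neg, if_false,
      add_zero]
    refine Finset.sum_congr rfl (fun β hβ => ?_)
    rw [if_pos (by omega : 2 ≤ β + 1 + 1), show m+2-(β+1+1) = m - β from by omega,
      show β+1+1-2 = β from by omega]
  have e2 : ssTheta (m+2) d γ (P * monomial ssS2 lam)
      = ∑ β ∈ Finset.range (m+1), lam * (γ (m+1-β) * MvPolynomial.coeff (ssE m d β) P) := by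
    rw [ssTheta]
    have step : ∀ α ∈ Finset.range (m+3),
        γ (m+2-α) * MvPolynomial.coeff (ssE (m+2) d α) (P * monomial ssS2 lam)
          = if 1 ≤ α ∧ α + 1 ≤ m+2 then
              lam * (γ (m+2-α) * MvPolynomial.coeff (ssE m d (α-1)) P) else 0 := by
      intro α hα
      rw [Finset.mem_range] at hα
      rw [MvPolynomial.coeff_mul_monomial']
      by_cases h : 1 ≤ α ∧ α + 1 ≤ m+2
      · rw [if_pos ((ssS2_le_iff (m+2) d α (by omega)).mpr h), if_pos h,
          ssE_sub2 (m+2) d α h.1 h.2]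
        rw [show m+2-2 = m from by omega]
        ring
      · rw [if_neg (fun hc => h ((ssS2_le_iff (m+2) d α (by omega)).mp hc)), if_neg h, mul_zero]
    rw [Finset.sum_congr rfl step]
    rw [Finset.sum_range_succ, Finset.sum_range_succ']
    simp only [show ¬ ((1:ℕ) ≤ 0 ∧ 0 + 1 ≤ m + 2) by omega,
      show ¬ ((1:ℕ) ≤ m+2 ∧ (m+2) + 1 ≤ m + 2) by omega, if_neg, if_false, add_zero]
    refine Finset.sum_congr rfl (fun β hβ => ?_)
    rw [Finset.mem_range] at hβ
    rw [if_pos (by omega : 1 ≤ β + 1 ∧ (β+1) + 1 ≤ m+2), show m+2-(β+1) = m+1-β from by omega,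
      show β+1-1 = β from by omega]
  have e3 : ssTheta (m+2) d γ (P * monomial ssS3 1)
      = ∑ β ∈ Finset.range (m+1), γ (m+2-β) * MvPolynomial.coeff (ssE m d β) P := by
    rw [ssTheta]
    have step : ∀ α ∈ Finset.range (m+3),
        γ (m+2-α) * MvPolynomial.coeff (ssE (m+2) d α) (P * monomial ssS3 1)
          = if α + 2 ≤ m + 2 then γ (m+2-α) * MvPolynomial.coeff (ssE m d α) P else 0 := by
      intro α hα
      rw [Finset.mem_range] at hα
      rw [MvPolynomial.coeff_mul_monomial']
      by_cases h : α + 2 ≤ m + 2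
      · rw [if_pos ((ssS3_le_iff (m+2) d α (by omega)).mpr h), if_pos h,
          ssE_sub3 (m+2) d α h]
        simp
      · rw [if_neg (fun hc => h ((ssS3_le_iff (m+2) d α (by omega)).mp hc)), if_neg h, mul_zero]
    rw [Finset.sum_congr rfl step]
    rw [Finset.sum_range_succ, Finset.sum_range_succ]
    simp only [show ¬ (m+2+2 ≤ m + 2) by omega, show ¬ (m+1+2 ≤ m + 2) by omega,
      if_neg, if_false, add_zero]
    refine Finset.sum_congr rfl (fun β hβ => ?_)
    rw [Finset.mem_range] at hβ
    rw [if_pos (by omega : β + 2 ≤ m+2)]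
  rw [e1, e2, e3, ← Finset.sum_add_distrib, ← Finset.sum_add_distrib]
  refine Finset.sum_eq_zero (fun β hβ => ?_)
  rw [Finset.mem_range] at hβ
  have h0 : m - β + 2 = m + 2 - β := by omega
  have h1 : m - β + 1 = m + 1 - β := by omega
  have := hrec (m - β)
  rw [h0, h1] at this
  rw [this]
  ring

lemma ssTheta_witness :
    ssTheta (m+2) d γ (monomial (ssE (m+2) d 1) (1:K)) = γ (m+1) := by
  rw [ssTheta]
  rw [Finset.sum_eq_single 1]
  · rw [MvPolynomial.coeff_monomial, if_pos rfl, mul_one, show m+2-1 = m+1 from by omega]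
  · intro α hα hne
    rw [MvPolynomial.coeff_monomial, if_neg, mul_zero]
    intro hc
    have := congrArg (fun (f : Fin 4 →₀ ℕ) => f 2) hc
    simp only [ssE_apply2] at this
    exact hne this.symm
  · intro h
    simp at h

end NM


section Abstract4b
variable {K : Type*} [CommRing K]

/-- The key non-membership result in 4 variables. -/
lemma ssNotMem (lam : K) (γ : ℕ → K) (m d : ℕ)
    (hrec : ∀ j, γ (j+2) = -(lam * γ (j+1)) - γ j) (hγ0 : γ 0 = 0) (hγn : γ (m+2) = 0)
    (s : K) (hprod : s * γ (m+1) ≠ 0) :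
    (C s * monomial (ssE (m+2) d 1) 1 : MvPolynomial (Fin 4) K) ∉
      Ideal.span {(X 0 : MvPolynomial (Fin 4) K)^(d+(m+2)), X 1^(d+(m+2)), X 2^(d+(m+2)),
        X 3^(d+(m+2)),
        monomial ssS1 1 + monomial ssS2 lam + monomial ssS3 (1:K)} := by
  intro hmem
  set T : Ideal (MvPolynomial (Fin 4) K) :=
    { carrier := {w | ∀ P, ssTheta (m+2) d γ (P * w) = 0}
      add_mem' := fun {a b} ha hb P => by
        rw [mul_add, ssTheta_add, ha P, hb P, add_zero]
      zero_mem' := fun P => by rw [mul_zero, ssTheta_zero]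
      smul_mem' := fun a w hw P => by
        rw [smul_eq_mul, ← mul_assoc]; exact hw (P * a) } with hT
  have hle : Ideal.span {(X 0 : MvPolynomial (Fin 4) K)^(d+(m+2)), X 1^(d+(m+2)),
      X 2^(d+(m+2)), X 3^(d+(m+2)),
      monomial ssS1 1 + monomial ssS2 lam + monomial ssS3 (1:K)} ≤ T := by
    rw [Ideal.span_le]
    intro w hw
    simp only [Set.mem_insert_iff, Set.mem_singleton_iff] at hw
    rcases hw with h | h | h | h | h <;> subst h
    · intro P; rw [X_pow_eq_monomial]; exact ssTheta_kill_pow0 γ m d hγ0 hγn P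
    · intro P; rw [X_pow_eq_monomial]; exact ssTheta_kill_pow1 γ m d hγ0 hγn P
    · intro P; rw [X_pow_eq_monomial]; exact ssTheta_kill_pow2 γ m d hγ0 hγn P
    · intro P; rw [X_pow_eq_monomial]; exact ssTheta_kill_pow3 γ m d hγ0 hγn P
    · intro P; exact ssTheta_kill_f lam γ m d hrec hγ0 hγn P
  have hzero := hle hmem 1
  rw [one_mul] at hzero
  have : ssTheta (m+2) d γ (C s * monomial (ssE (m+2) d 1) 1) = s * γ (m+1) := by
    rw [ssTheta]
    have : ∀ α, MvPolynomial.coeff (ssE (m+2) d α) (C s * monomial (ssE (m+2) d 1) 1)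
        = s * MvPolynomial.coeff (ssE (m+2) d α) (monomial (ssE (m+2) d 1) 1) := by
      intro α; rw [MvPolynomial.coeff_C_mul]
    simp only [this]
    have := ssTheta_witness (K := K) γ m d
    rw [ssTheta] at this
    calc ∑ α ∈ Finset.range (m+2+1), γ (m+2-α) *
          (s * MvPolynomial.coeff (ssE (m+2) d α) (monomial (ssE (m+2) d 1) 1))
        = s * ∑ α ∈ Finset.range (m+2+1), γ (m+2-α) *
          MvPolynomial.coeff (ssE (m+2) d α) (monomial (ssE (m+2) d 1) 1) := by
          rw [Finset.mul_sum]; exact Finset.sum_congr rfl (fun α _ => by ring)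
      _ = s * γ (m+1) := by rw [this]
  rw [this] at hzero
  exact hprod hzero


end Abstract4b

section Transfer
variable (k : Type*) [Field k] (K : Type*) [CommRing K] [Algebra k K]

/-- the reduction homomorphism sending `t` to a scalar -/
noncomputable def ssPhi (lam : K) : MvPolynomial (Fin 5) k →ₐ[k] MvPolynomial (Fin 4) K :=
  aeval (fun i => Fin.cases (C lam) (fun j : Fin 4 => X j) i)

variable (lam : K)

lemma ssPhi_X0 : ssPhi k K lam (X 0) = C lam := by simp [ssPhi]
lemma ssPhi_X1 : ssPhi k K lam (X 1) = X 0 := by simp [ssPhi]; rfl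
lemma ssPhi_X2 : ssPhi k K lam (X 2) = X 1 := by simp [ssPhi]; rfl
lemma ssPhi_X3 : ssPhi k K lam (X 3) = X 2 := by simp [ssPhi]; rfl
lemma ssPhi_X4 : ssPhi k K lam (X 4) = X 3 := by simp [ssPhi]; rfl

lemma ssS1_poly : (monomial ssS1 1 : MvPolynomial (Fin 4) K) = X 0^2 * X 2^2 := by
  rw [X_pow_eq_monomial, X_pow_eq_monomial, monomial_mul, mul_one]
  rfl

lemma ssS2_poly : (monomial ssS2 lam : MvPolynomial (Fin 4) K)
    = C lam * (X 0 * X 1 * X 2 * X 3) := by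
  have hX : ∀ (i : Fin 4), (X i : MvPolynomial (Fin 4) K) = monomial (Finsupp.single i 1) 1 :=
    fun i => rfl
  rw [hX 0, hX 1, hX 2, hX 3, monomial_mul, monomial_mul, monomial_mul, C_mul_monomial]
  simp [ssS2]

lemma ssS3_poly : (monomial ssS3 1 : MvPolynomial (Fin 4) K) = X 1^2 * X 3^2 := by
  rw [X_pow_eq_monomial, X_pow_eq_monomial, monomial_mul, mul_one]
  rfl

lemma ssPhi_f : ssPhi k K lam (ssEqn k)
    = monomial ssS1 1 + monomial ssS2 lam + monomial ssS3 (1:K) := by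
  rw [ssEqn, ssS1_poly, ssS2_poly, ssS3_poly]
  rw [map_add, map_add, map_mul, map_mul, map_mul, map_mul, map_mul, map_mul,
    map_pow, map_pow, map_pow, map_pow, ssPhi_X0, ssPhi_X1, ssPhi_X2, ssPhi_X3, ssPhi_X4]
  ring

lemma ssE_poly (m d : ℕ) : (monomial (ssE (m+2) d 1) 1 : MvPolynomial (Fin 4) K)
    = X 0^(d+1) * X 1^(d+(m+1)) * X 2 * X 3^(m+1) := by
  have hX : (X 2 : MvPolynomial (Fin 4) K) = monomial (Finsupp.single 2 1) 1 := rfl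
  rw [X_pow_eq_monomial, X_pow_eq_monomial, X_pow_eq_monomial, hX,
    monomial_mul, monomial_mul, monomial_mul]
  rw [ssE, show d+(m+2)-1 = d+(m+1) from by omega, show (m+2)-1 = m+1 from by omega]
  norm_num

end Transfer

section NotMem5
variable {k : Type*} [Field k]

lemma ssNotMem5 (m d : ℕ) (h : Polynomial k) (hirr : Irreducible h)
    (hdvd : h ∣ ssC k (m+2)) (σ : Polynomial k) (hσ : ¬ h ∣ σ) :
    (Polynomial.aeval (X 0 : MvPolynomial (Fin 5) k) σ) *
      (X 1^(d+1) * X 2^(d+(m+1)) * X 3 * X 4^(m+1)) ∉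
    Ideal.span {(X 1: MvPolynomial (Fin 5) k)^(d+(m+2)), X 2^(d+(m+2)), X 3^(d+(m+2)),
      X 4^(d+(m+2)), ssEqn k} := by
  set K := Polynomial k ⧸ Ideal.span {h} with hK
  set lam : K := Ideal.Quotient.mk (Ideal.span {h}) Polynomial.X with hlam
  have heval : ∀ r : Polynomial k, Polynomial.aeval lam r
      = Ideal.Quotient.mk (Ideal.span {h}) r := by
    intro r
    have h1 := Polynomial.aeval_algHom_apply
      (Ideal.Quotient.mkₐ k (Ideal.span {h})) Polynomial.X r
    rw [Polynomial.aeval_X_left_apply] at h1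
    simpa [Ideal.Quotient.mkₐ_eq_mk] using h1
  set γ : ℕ → K := fun j => Polynomial.aeval lam (ssC k j) with hγ
  have hrec : ∀ j, γ (j+2) = -(lam * γ (j+1)) - γ j := by
    intro j
    simp only [hγ, ssC_add_two, map_sub, map_neg, map_mul, Polynomial.aeval_X]
  have hγ0 : γ 0 = 0 := by simp [hγ, ssC_zero]
  have hγn : γ (m+2) = 0 := by
    rw [hγ]
    simp only
    rw [heval, Ideal.Quotient.eq_zero_iff_mem, Ideal.mem_span_singleton]
    exact hdvd
  have hprime : Prime h := hirr.prime
  have hprod : (Ideal.Quotient.mk (Ideal.span {h}) σ) * γ (m+1) ≠ 0 := by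
    rw [hγ]
    simp only
    rw [heval, ← map_mul, Ne, Ideal.Quotient.eq_zero_iff_mem, Ideal.mem_span_singleton]
    intro hc
    rcases hprime.dvd_mul.mp hc with hc' | hc'
    · exact hσ hc'
    · exact hirr.not_isUnit ((ssC_coprime_succ (k := k) (m+1)).isUnit_of_dvd' hc' hdvd)
  intro hmem
  have h2 := Ideal.mem_map_of_mem (ssPhi k K lam).toRingHom hmem
  rw [Ideal.map_span] at h2
  have himg : (ssPhi k K lam).toRingHom ''
      {(X 1: MvPolynomial (Fin 5) k)^(d+(m+2)), X 2^(d+(m+2)), X 3^(d+(m+2)),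
        X 4^(d+(m+2)), ssEqn k}
      = {(X 0 : MvPolynomial (Fin 4) K)^(d+(m+2)), X 1^(d+(m+2)), X 2^(d+(m+2)),
        X 3^(d+(m+2)),
        monomial ssS1 1 + monomial ssS2 lam + monomial ssS3 (1:K)} := by
    simp only [Set.image_insert_eq, Set.image_singleton, AlgHom.toRingHom_eq_coe,
      RingHom.coe_coe, map_pow]
    rw [ssPhi_X1, ssPhi_X2, ssPhi_X3, ssPhi_X4, ssPhi_f]
  rw [himg] at h2
  have hval : (ssPhi k K lam).toRingHom
      ((Polynomial.aeval (X 0 : MvPolynomial (Fin 5) k) σ) *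
        (X 1^(d+1) * X 2^(d+(m+1)) * X 3 * X 4^(m+1)))
      = C (Ideal.Quotient.mk (Ideal.span {h}) σ) * monomial (ssE (m+2) d 1) 1 := by
    rw [AlgHom.toRingHom_eq_coe, RingHom.coe_coe, map_mul]
    congr 1
    · have e1 := Polynomial.aeval_algHom_apply (ssPhi k K lam) (X 0) σ
      rw [ssPhi_X0] at e1
      rw [← e1]
      have e2 := Polynomial.aeval_algHom_apply
        (IsScalarTower.toAlgHom k K (MvPolynomial (Fin 4) K)) lam σ
      have e3 : (IsScalarTower.toAlgHom k K (MvPolynomial (Fin 4) K)) lam = C lam := by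
        simp [IsScalarTower.toAlgHom_apply, MvPolynomial.algebraMap_eq]
      rw [e3] at e2
      rw [e2, heval]
      simp [IsScalarTower.toAlgHom_apply, MvPolynomial.algebraMap_eq]
    · rw [map_mul, map_mul, map_mul, map_pow, map_pow, map_pow,
        ssPhi_X1, ssPhi_X2, ssPhi_X3, ssPhi_X4, ssE_poly]
  rw [hval] at h2
  exact ssNotMem lam γ m d hrec hγ0 hγn _ hprod h2

end NotMem5


section Glue
variable {k : Type*} [Field k]

lemma ssDescend {R' : Type*} [CommRing R'] (J : Ideal R') (r : R') :
    ∀ (mm : ℕ) (Z : R'), Z ∉ J → r^mm * Z ∈ J → ∃ W, W ∉ J ∧ r * W ∈ J := by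
  intro mm
  induction mm with
  | zero => intro Z hZ hmem; exact absurd (by simpa using hmem) hZ
  | succ mm ih =>
    intro Z hZ hmem
    by_cases hc : r^mm * Z ∈ J
    · exact ih Z hZ hc
    · exact ⟨r^mm * Z, hc, by rw [← mul_assoc, ← pow_succ']; exact hmem⟩

lemma ssFrob_mem_iff (q : ℕ) (w : MvPolynomial (Fin 5) k) :
    Ideal.Quotient.mk (Ideal.span {ssEqn k}) w ∈ ssFrob k q ↔
      w ∈ Ideal.span {(X 1 : MvPolynomial (Fin 5) k)^q, X 2^q, X 3^q, X 4^q, ssEqn k} := by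
  constructor
  · intro hw
    have hmap : ssFrob k q = Ideal.map (Ideal.Quotient.mk (Ideal.span {ssEqn k}))
        (Ideal.span {(X 1 : MvPolynomial (Fin 5) k)^q, X 2^q, X 3^q, X 4^q}) := by
      rw [ssFrob, Ideal.map_span]
      congr 1
      simp [Set.image_insert_eq, map_pow]
    rw [hmap] at hw
    obtain ⟨x, hx, hxy⟩ := (Ideal.mem_map_iff_of_surjective _
      Ideal.Quotient.mk_surjective).mp hw
    have hsub : x - w ∈ Ideal.span {ssEqn k} := (Ideal.Quotient.eq).mp hxy
    have hx5 : x ∈ Ideal.span {(X 1 : MvPolynomial (Fin 5) k)^q, X 2^q, X 3^q, X 4^q,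
        ssEqn k} := by
      refine Ideal.span_mono ?_ hx
      intro z hz
      simp only [Set.mem_insert_iff, Set.mem_singleton_iff] at hz ⊢
      tauto
    have hsub5 : x - w ∈ Ideal.span {(X 1 : MvPolynomial (Fin 5) k)^q, X 2^q, X 3^q, X 4^q,
        ssEqn k} := by
      refine Ideal.span_mono ?_ hsub
      intro z hz
      simp only [Set.mem_singleton_iff] at hz
      simp [hz]
    have := Ideal.sub_mem _ hx5 hsub5
    simpa using this
  · intro hw
    have hle : Ideal.span {(X 1 : MvPolynomial (Fin 5) k)^q, X 2^q, X 3^q, X 4^q, ssEqn k}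
        ≤ Ideal.comap (Ideal.Quotient.mk (Ideal.span {ssEqn k})) (ssFrob k q) := by
      rw [Ideal.span_le]
      intro g hg
      simp only [Set.mem_insert_iff, Set.mem_singleton_iff] at hg
      rcases hg with h | h | h | h | h <;> subst h <;>
        rw [SetLike.mem_coe, Ideal.mem_comap]
      · exact Ideal.subset_span (by simp)
      · exact Ideal.subset_span (by simp)
      · exact Ideal.subset_span (by simp)
      · exact Ideal.subset_span (by simp)
      · have hz : Ideal.Quotient.mk (Ideal.span {ssEqn k}) (ssEqn k) = 0 :=
          Ideal.Quotient.eq_zero_iff_mem.mpr (Ideal.subset_span rfl)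
        rw [hz]
        exact Ideal.zero_mem _
    exact hle hw

lemma ssMain (p : ℕ) (hp : p.Prime) (ℓ : ℕ) (hℓ : 2 ≤ ℓ) :
    ∃ Qh : Ideal (SSRing k) × Polynomial k,
      (∃ e, 1 ≤ e ∧ Qh.1 ∈ associatedPrimes (SSRing k) (SSRing k ⧸ ssFrob k (p^e))) ∧
      Irreducible Qh.2 ∧ Qh.2 ∣ ssC k ℓ ∧
      Ideal.Quotient.mk (Ideal.span {ssEqn k}) (Polynomial.aeval (X 0) Qh.2) ∈ Qh.1 := by
  obtain ⟨m, rfl⟩ : ∃ m, ℓ = m + 2 := ⟨ℓ - 2, by omega⟩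
  have hc0 : ssC k (m+2) ≠ 0 := ssC_ne_zero (m+1)
  obtain ⟨h, hirr, hdvd⟩ := WfDvdMonoid.exists_irreducible_factor (ssC_not_unit m) hc0
  obtain ⟨mm, σ, hσ, hfac⟩ := WfDvdMonoid.max_power_factor hc0 hirr
  set q := p ^ (m+2) with hqdef
  have hq : m + 2 ≤ q := by
    calc m + 2 ≤ 2 ^ (m+2) := (Nat.lt_two_pow_self (n := m+2)).le
    _ ≤ p ^ (m+2) := Nat.pow_le_pow_left hp.two_le _
  set d := q - (m+2) with hd
  have hqd : q = d + (m+2) := by omega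
  -- membership
  have hmem := ssMem (k := k) (m+1) d
  rw [show d+(m+1)+1 = d+(m+2) from by omega] at hmem
  have hmem2 : (Polynomial.aeval (X 0 : MvPolynomial (Fin 5) k) h)^mm *
      ((Polynomial.aeval (X 0 : MvPolynomial (Fin 5) k) σ) *
        (X 1^(d+1) * X 2^(d+(m+1)) * X 3 * X 4^(m+1))) ∈
      Ideal.span {(X 1: MvPolynomial (Fin 5) k)^(d+(m+2)), X 2^(d+(m+2)), X 3^(d+(m+2)),
        X 4^(d+(m+2)), ssEqn k} := by
    have : (Polynomial.aeval (X 0 : MvPolynomial (Fin 5) k) h)^mm *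
        ((Polynomial.aeval (X 0 : MvPolynomial (Fin 5) k) σ) *
          (X 1^(d+1) * X 2^(d+(m+1)) * X 3 * X 4^(m+1)))
        = ssCA k (m+2) * (X 1^(d+1) * X 2^(d+(m+1)) * X 3 * X 4^(m+1)) := by
      rw [ssCA, hfac, map_mul, map_pow]
      ring
    rw [this]
    exact hmem
  have hnot := ssNotMem5 m d h hirr hdvd σ hσ
  obtain ⟨W, hWnot, hWmem⟩ := ssDescend _ _ mm _ hnot hmem2
  -- move to the quotient ring
  have hx : (Submodule.Quotient.mk (Ideal.Quotient.mk (Ideal.span {ssEqn k}) W) :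
      SSRing k ⧸ ssFrob k q) ≠ 0 := by
    rw [Ne, Submodule.Quotient.mk_eq_zero]
    rw [ssFrob_mem_iff]
    rw [← hqd] at hWnot
    exact hWnot
  obtain ⟨P, hP, hle⟩ := exists_le_isAssociatedPrime_of_isNoetherianRing (SSRing k) _ hx
  refine ⟨(P, h), ⟨m+2, by omega, hP⟩, hirr, hdvd, ?_⟩
  apply hle
  rw [Submodule.mem_colon_singleton, Submodule.mem_bot]
  have : (Ideal.Quotient.mk (Ideal.span {ssEqn k}) (Polynomial.aeval (X 0) h)) •
      (Submodule.Quotient.mk (Ideal.Quotient.mk (Ideal.span {ssEqn k}) W) :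
        SSRing k ⧸ ssFrob k q)
      = Submodule.Quotient.mk (Ideal.Quotient.mk (Ideal.span {ssEqn k})
          (Polynomial.aeval (X 0) h * W)) := by
    rw [← Submodule.Quotient.mk_smul, smul_eq_mul, ← map_mul]
  rw [this, Submodule.Quotient.mk_eq_zero, ssFrob_mem_iff]
  rw [← hqd] at hWmem
  exact hWmem

end Glue

theorem stmt16 {k : Type*} [Field k] (p : ℕ) (hp : p.Prime) [CharP k p] :
    Set.Infinite {Q : Ideal (SSRing k) |
      ∃ e : ℕ, 1 ≤ e ∧ Q ∈ associatedPrimes (SSRing k) (SSRing k ⧸ ssFrob k (p ^ e))} := by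
  classical
  set F : ℕ → Ideal (SSRing k) × Polynomial k := fun ℓ =>
    if hc : 2 ≤ ℓ then (ssMain p hp ℓ hc).choose else (⊥, 0) with hF
  have hFspec : ∀ ℓ (hc : 2 ≤ ℓ),
      (∃ e, 1 ≤ e ∧ (F ℓ).1 ∈ associatedPrimes (SSRing k) (SSRing k ⧸ ssFrob k (p^e))) ∧
      Irreducible (F ℓ).2 ∧ (F ℓ).2 ∣ ssC k ℓ ∧
      Ideal.Quotient.mk (Ideal.span {ssEqn k}) (Polynomial.aeval (X 0) (F ℓ).2) ∈ (F ℓ).1 := by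
    intro ℓ hc
    rw [hF]
    simp only [dif_pos hc]
    exact (ssMain p hp ℓ hc).choose_spec
  apply Set.infinite_of_injOn_mapsTo (f := fun ℓ => (F ℓ).1) (s := {ℓ : ℕ | ℓ.Prime})
  · -- injective on primes
    intro ℓ hℓ ℓ' hℓ' heq
    by_contra hne
    have hcℓ : 2 ≤ ℓ := (hℓ : ℓ.Prime).two_le
    have hcℓ' : 2 ≤ ℓ' := (hℓ' : ℓ'.Prime).two_le
    obtain ⟨hassoc, hirr, hdvd, hmemQ⟩ := hFspec ℓ hcℓ
    obtain ⟨hassoc', hirr', hdvd', hmemQ'⟩ := hFspec ℓ' hcℓ'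
    have hcop : IsCoprime (ssC k ℓ) (ssC k ℓ') :=
      ssC_coprime ℓ ℓ' (by omega) (by omega)
        ((Nat.coprime_primes hℓ hℓ').mpr hne)
    have hch : IsCoprime ((F ℓ).2) ((F ℓ').2) :=
      (hcop.of_isCoprime_of_dvd_left hdvd).of_isCoprime_of_dvd_right hdvd'
    obtain ⟨a, b, hab⟩ := hch
    set Ψ : Polynomial k →+* SSRing k :=
      (Ideal.Quotient.mk (Ideal.span {ssEqn k})).comp
        (Polynomial.aeval (X 0 : MvPolynomial (Fin 5) k)).toRingHom with hΨ
    have h1 : Ψ a * Ψ (F ℓ).2 + Ψ b * Ψ (F ℓ').2 = 1 := by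
      rw [← map_mul, ← map_mul, ← map_add, hab, map_one]
    have hmemQ2 : Ψ (F ℓ).2 ∈ (F ℓ).1 := hmemQ
    have hmemQ2' : Ψ (F ℓ').2 ∈ (F ℓ).1 := by
      rw [show (F ℓ).1 = (F ℓ').1 from heq]
      exact hmemQ'
    have hone : (1 : SSRing k) ∈ (F ℓ).1 := by
      rw [← h1]
      exact Ideal.add_mem _ (Ideal.mul_mem_left _ _ hmemQ2) (Ideal.mul_mem_left _ _ hmemQ2')
    obtain ⟨e, he, hQass⟩ := hassoc
    exact hQass.isPrime.ne_top ((Ideal.eq_top_iff_one _).mpr hone)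
  · -- maps into the set
    intro ℓ hℓ
    have hcℓ : 2 ≤ ℓ := (hℓ : ℓ.Prime).two_le
    obtain ⟨hassoc, _, _, _⟩ := hFspec ℓ hcℓ
    exact hassoc
  · exact Nat.infinite_setOf_prime
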